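/- For the Cantor distribution, m(x) = 5/6 - x for all x ∈ [1/3, 2/3], where m is the mean residual life function. -/

import Mathlib

open MeasureTheory Set Filter

/-- The CDF of the Cantor distribution: the monotone function on [0,1] with
F(0)=0, F(1)=1 satisfying the two self-similarity relations
F(x/3) = F(x)/2 and F((x+2)/3) = 1/2 + F(x)/2. -/
def IsCantorCDF (F : ℝ → ℝ) : Prop :=
  Monotone F ∧ F 0 = 0 ∧ F 1 = 1 ∧
    (∀ x ∈ Set.Icc (0:ℝ) 1, F (x/3) = F x / 2) ∧
    (∀ x ∈ Set.Icc (0:ℝ) 1, F ((x+2)/3) = 1/2 + F x / 2)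

/-- The mean residual life function of a distribution with CDF F supported on [0,1]:
m(x) = (1/(1-F(x))) ∫_x^1 (1-F(u)) du  (equal to 0 at x = 1 by convention). -/
noncomputable def mrl (F : ℝ → ℝ) (x : ℝ) : ℝ :=
  (∫ u in x..(1:ℝ), (1 - F u)) / (1 - F x)

lemma cantor_mid (F : ℝ → ℝ) (hF : IsCantorCDF F) :
    ∀ y ∈ Set.Icc (1/3 : ℝ) (2/3), F y = 1/2 := by
  obtain ⟨hmono, h0, h1, hs1, hs2⟩ := hF
  have hl : F (1/3) = 1/2 := by
    have := hs1 1 (by norm_num); norm_num at this; linarith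
  have hr : F (2/3) = 1/2 := by
    have := hs2 0 (by norm_num); norm_num [h0] at this; linarith
  intro y hy
  have := hmono hy.1
  have := hmono hy.2
  linarith

/-- For the Cantor distribution, m(x) = 5/6 - x for all x ∈ [1/3, 2/3]. -/
theorem cantor_mrl_middle (F : ℝ → ℝ) (hF : IsCantorCDF F) :
    ∀ x ∈ Set.Icc (1/3 : ℝ) (2/3), mrl F x = 5/6 - x := by
  have hmid := cantor_mid F hF
  obtain ⟨hmono, h0, h1, hs1, hs2⟩ := hF
  have hint : ∀ a b : ℝ, IntervalIntegrable F volume a b :=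
    fun a b => hmono.intervalIntegrable
  set J : ℝ := ∫ u in (0:ℝ)..1, F u with hJ
  -- ∫_0^{1/3} F = J/6
  have hA : (∫ u in (0:ℝ)..(1/3), F u) = J / 6 := by
    have h1' : (∫ x in (0:ℝ)..1, F (x/3)) = (3:ℝ) • ∫ u in ((0:ℝ)/3)..((1:ℝ)/3), F u :=
      intervalIntegral.integral_comp_div F (by norm_num)
    have h2' : (∫ x in (0:ℝ)..1, F (x/3)) = ∫ x in (0:ℝ)..1, F x / 2 := by
      apply intervalIntegral.integral_congr
      intro x hx
      rw [Set.uIcc_of_le (by norm_num : (0:ℝ) ≤ 1)] at hx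
      exact hs1 x hx
    have h3' : (∫ x in (0:ℝ)..1, F x / 2) = J / 2 := by
      rw [intervalIntegral.integral_div]
    rw [h2', h3'] at h1'
    norm_num at h1' ⊢
    linarith
  -- ∫_{1/3}^{2/3} F = 1/6
  have hB : (∫ u in (1/3:ℝ)..(2/3), F u) = 1/6 := by
    have : (∫ u in (1/3:ℝ)..(2/3), F u) = ∫ u in (1/3:ℝ)..(2/3), (1/2:ℝ) := by
      apply intervalIntegral.integral_congr
      intro u hu
      rw [Set.uIcc_of_le (by norm_num : (1/3:ℝ) ≤ 2/3)] at hu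
      exact hmid u hu
    rw [this]; simp; norm_num
  -- ∫_{2/3}^1 F = 1/6 + J/6
  have hC : (∫ u in (2/3:ℝ)..1, F u) = 1/6 + J / 6 := by
    have h1' : (∫ x in (0:ℝ)..1, F ((x+2)/3)) = ∫ x in ((0:ℝ)+2)..((1:ℝ)+2), F (x/3) :=
      intervalIntegral.integral_comp_add_right (fun x => F (x/3)) 2
    have h2' : (∫ x in ((0:ℝ)+2)..((1:ℝ)+2), F (x/3))
        = (3:ℝ) • ∫ u in (((0:ℝ)+2)/3)..(((1:ℝ)+2)/3), F u :=
      intervalIntegral.integral_comp_div F (by norm_num)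
    have h3' : (∫ x in (0:ℝ)..1, F ((x+2)/3)) = ∫ x in (0:ℝ)..1, (1/2 + F x / 2) := by
      apply intervalIntegral.integral_congr
      intro x hx
      rw [Set.uIcc_of_le (by norm_num : (0:ℝ) ≤ 1)] at hx
      exact hs2 x hx
    have h4' : (∫ x in (0:ℝ)..1, (1/2 + F x / 2)) = 1/2 + J / 2 := by
      rw [intervalIntegral.integral_add (by simp) ((hint 0 1).div_const 2)]
      simp [intervalIntegral.integral_div]
      exact hJ.symm
    rw [h3', h4'] at h1'
    rw [← h1'] at h2'
    norm_num at h2' ⊢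
    linarith
  -- J = 1/2
  have hJval : J = 1/2 := by
    have hsplit : (∫ u in (0:ℝ)..(1/3), F u) + (∫ u in (1/3:ℝ)..(2/3), F u)
        + (∫ u in (2/3:ℝ)..1, F u) = J := by
      rw [intervalIntegral.integral_add_adjacent_intervals (hint 0 (1/3)) (hint (1/3) (2/3)),
        intervalIntegral.integral_add_adjacent_intervals (hint 0 (2/3)) (hint (2/3) 1)]
    rw [hA, hB, hC] at hsplit
    linarith
  have hCval : (∫ u in (2/3:ℝ)..1, F u) = 1/4 := by rw [hC, hJval]; norm_num
  intro x hx
  have hFx : F x = 1/2 := hmid x hx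
  -- ∫_x^{2/3} F = (2/3 - x)/2
  have hD : (∫ u in x..(2/3:ℝ), F u) = (2/3 - x) / 2 := by
    have : (∫ u in x..(2/3:ℝ), F u) = ∫ u in x..(2/3:ℝ), (1/2:ℝ) := by
      apply intervalIntegral.integral_congr
      intro u hu
      rw [Set.uIcc_of_le hx.2] at hu
      exact hmid u ⟨le_trans hx.1 hu.1, hu.2⟩
    rw [this]; simp; ring
  have hE : (∫ u in x..(1:ℝ), F u) = (2/3 - x)/2 + 1/4 := by
    rw [← intervalIntegral.integral_add_adjacent_intervals (hint x (2/3)) (hint (2/3) 1),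
      hD, hCval]
  have hnum : (∫ u in x..(1:ℝ), (1 - F u)) = 5/12 - x/2 := by
    rw [intervalIntegral.integral_sub intervalIntegrable_const (hint x 1), hE]
    simp
    ring
  rw [mrl, hnum, hFx]
  norm_num
  ring
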